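/- Casimir polynomials of the sl(2) Lie–Poisson structure: on MvPolynomial (Fin 3) ℝ with variables p = X 0, q = X 1, r = X 2, define the bracket {F, G} := r·(∂_p F·∂_q G − ∂_q F·∂_p G) − 2p·(∂_p F·∂_r G − ∂_r F·∂_p G) + 2q·(∂_q F·∂_r G − ∂_r F·∂_q G), where ∂_i = pderiv i. Then a polynomial F satisfies {F, G} = 0 for every G if and only if there is a one-variable polynomial u ∈ Polynomial ℝ with F = Polynomial.aeval (4·(X 0)·(X 1) + (X 2)^2) u; that is, the Casimir polynomials are exactly the polynomials in 4pq + r². -/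

import Mathlib

open MvPolynomial

/-- The Lie–Poisson bracket of `sl(2,ℝ)` on `ℝ³` with coordinates
`p = X 0`, `q = X 1`, `r = X 2`:
`{F, G} = r(∂ₚF ∂_qG − ∂_qF ∂ₚG) − 2p(∂ₚF ∂ᵣG − ∂ᵣF ∂ₚG) + 2q(∂_qF ∂ᵣG − ∂ᵣF ∂_qG)`. -/
noncomputable def sl2Bracket (F G : MvPolynomial (Fin 3) ℝ) : MvPolynomial (Fin 3) ℝ :=
  X 2 * (pderiv 0 F * pderiv 1 G - pderiv 1 F * pderiv 0 G)
    - 2 * X 0 * (pderiv 0 F * pderiv 2 G - pderiv 2 F * pderiv 0 G)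
    + 2 * X 1 * (pderiv 1 F * pderiv 2 G - pderiv 2 F * pderiv 1 G)

namespace Sl2Aux

noncomputable def C3 : MvPolynomial (Fin 3) ℝ := 4 * X 0 * X 1 + X 2 ^ 2

lemma pderiv_four (i : Fin 3) : pderiv i (4 : MvPolynomial (Fin 3) ℝ) = 0 := by
  rw [show (4 : MvPolynomial (Fin 3) ℝ) = C 4 from (map_ofNat _ 4).symm, pderiv_C]

lemma sl2Bracket_sub (F₁ F₂ G : MvPolynomial (Fin 3) ℝ) :
    sl2Bracket (F₁ - F₂) G = sl2Bracket F₁ G - sl2Bracket F₂ G := by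
  simp only [sl2Bracket, map_sub]; ring

lemma sl2Bracket_mul (F₁ F₂ G : MvPolynomial (Fin 3) ℝ) :
    sl2Bracket (F₁ * F₂) G = F₁ * sl2Bracket F₂ G + F₂ * sl2Bracket F₁ G := by
  simp only [sl2Bracket, pderiv_mul]; ring

lemma sl2Bracket_Ca (a : ℝ) (G : MvPolynomial (Fin 3) ℝ) :
    sl2Bracket (C a) G = 0 := by
  simp [sl2Bracket, pderiv_C]

lemma sl2Bracket_C3 (G : MvPolynomial (Fin 3) ℝ) : sl2Bracket C3 G = 0 := by
  have h0 : pderiv 0 C3 = 4 * X 1 := by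
    simp [C3, pderiv_mul, pderiv_X_self, pderiv_X_of_ne, pderiv_pow, pderiv_four]; ring
  have h1 : pderiv 1 C3 = 4 * X 0 := by
    simp [C3, pderiv_mul, pderiv_X_self, pderiv_X_of_ne, pderiv_pow, pderiv_four]
  have h2 : pderiv 2 C3 = 2 * X 2 := by
    simp [C3, pderiv_mul, pderiv_X_self, pderiv_X_of_ne, pderiv_pow, pderiv_four]
  simp only [sl2Bracket, h0, h1, h2]; ring

lemma casimir_aeval (u : Polynomial ℝ) (G : MvPolynomial (Fin 3) ℝ) :
    sl2Bracket (Polynomial.aeval C3 u) G = 0 := by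
  induction u using Polynomial.induction_on' with
  | add p q hp hq =>
    have : sl2Bracket (Polynomial.aeval C3 p + Polynomial.aeval C3 q) G
        = sl2Bracket (Polynomial.aeval C3 p) G + sl2Bracket (Polynomial.aeval C3 q) G := by
      simp only [sl2Bracket, map_add]; ring
    rw [map_add, this, hp, hq, add_zero]
  | monomial n a =>
    have hpow : ∀ n : ℕ, sl2Bracket (C3 ^ n) G = 0 := by
      intro n
      induction n with
      | zero => simpa using sl2Bracket_Ca 1 G
      | succ k ih => rw [pow_succ, sl2Bracket_mul, ih, sl2Bracket_C3]; ring
    rw [Polynomial.aeval_monomial]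
    rw [show algebraMap ℝ (MvPolynomial (Fin 3) ℝ) a = C a from rfl]
    rw [sl2Bracket_mul, hpow, sl2Bracket_Ca]; ring

/-! ### Coefficient machinery -/

lemma coeff_pderiv (i : Fin 3) (m : Fin 3 →₀ ℕ) (f : MvPolynomial (Fin 3) ℝ) :
    coeff m (pderiv i f) = ((m i : ℝ) + 1) * coeff (m + Finsupp.single i 1) f := by
  induction f using MvPolynomial.induction_on' with
  | add p q hp hq => simp [hp, hq]; ring
  | monomial s a =>
    rw [pderiv_monomial, coeff_monomial, coeff_monomial]
    by_cases h : s = m + Finsupp.single i 1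
    · subst h
      have h1 : m + Finsupp.single i 1 - Finsupp.single i 1 = m := by
        ext j; simp
      rw [if_pos h1]
      simp [Finsupp.add_apply, Finsupp.single_apply]
      ring
    · rw [if_neg h, mul_zero]
      by_cases h0 : s i = 0
      · have hs : s - Finsupp.single i 1 = s := by
          ext j
          by_cases hj : j = i
          · subst hj; simp [h0, Finsupp.single_apply]
          · simp [Finsupp.single_apply, Ne.symm hj, hj]
        rw [hs]
        by_cases hsm : s = m
        · subst hsm; simp [h0]
        · rw [if_neg hsm]
      · have : s - Finsupp.single i 1 ≠ m := by
          intro he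
          apply h
          ext j
          have : s j - (Finsupp.single i 1) j = m j := by
            rw [← Finsupp.tsub_apply, he]
          by_cases hj : j = i
          · subst hj
            simp only [Finsupp.single_eq_same] at this ⊢
            simp only [Finsupp.add_apply, Finsupp.single_eq_same]
            omega
          · simp only [Finsupp.single_apply, if_neg (Ne.symm hj), Finsupp.add_apply] at this ⊢
            omega
        rw [if_neg this]

noncomputable def mk3 (a b c : ℕ) : Fin 3 →₀ ℕ :=
  Finsupp.single 0 a + Finsupp.single 1 b + Finsupp.single 2 c

@[simp] lemma mk3_apply_0 (a b c : ℕ) : mk3 a b c 0 = a := by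
  simp [mk3, Finsupp.single_apply]
@[simp] lemma mk3_apply_1 (a b c : ℕ) : mk3 a b c 1 = b := by
  simp [mk3, Finsupp.single_apply]
@[simp] lemma mk3_apply_2 (a b c : ℕ) : mk3 a b c 2 = c := by
  simp [mk3, Finsupp.single_apply]

lemma eq_mk3 (m : Fin 3 →₀ ℕ) : m = mk3 (m 0) (m 1) (m 2) := by
  ext j; fin_cases j <;> simp

lemma mk3_sub_e0 (a b c : ℕ) : mk3 (a+1) b c - Finsupp.single 0 1 = mk3 a b c := by
  ext j; fin_cases j <;> simp [Finsupp.single_apply]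

lemma mk3_sub_e2 (a b c : ℕ) : mk3 a b (c+1) - Finsupp.single 2 1 = mk3 a b c := by
  ext j; fin_cases j <;> simp [Finsupp.single_apply]

lemma mk3_add_e1 (a b c : ℕ) : mk3 a b c + Finsupp.single 1 1 = mk3 a (b+1) c := by
  ext j; fin_cases j <;> simp [Finsupp.single_apply]

lemma mk3_add_e2 (a b c : ℕ) : mk3 a b c + Finsupp.single 2 1 = mk3 a b (c+1) := by
  ext j; fin_cases j <;> simp [Finsupp.single_apply]

lemma coeff_X_mul'' (i : Fin 3) (m : Fin 3 →₀ ℕ) (f : MvPolynomial (Fin 3) ℝ) :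
    coeff m (X i * f) = if m i = 0 then 0 else coeff (m - Finsupp.single i 1) f := by
  rw [mul_comm, coeff_mul_X']
  simp only [Finsupp.mem_support_iff, ne_eq, ite_not]

lemma coeff_two_mul (m : Fin 3 →₀ ℕ) (f : MvPolynomial (Fin 3) ℝ) :
    coeff m (2 * f) = 2 * coeff m f := by
  rw [show (2 : MvPolynomial (Fin 3) ℝ) = C 2 from (map_ofNat _ 2).symm, coeff_C_mul]

lemma coeff_X_pderiv_self (i : Fin 3) (m : Fin 3 →₀ ℕ) (f : MvPolynomial (Fin 3) ℝ) :
    coeff m (X i * pderiv i f) = (m i : ℝ) * coeff m f := by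
  rw [coeff_X_mul'']
  split_ifs with h
  · rw [h]; simp
  · rw [coeff_pderiv]
    have h1 : m - Finsupp.single i 1 + Finsupp.single i 1 = m := by
      ext j
      by_cases hj : j = i
      · subst hj
        simp only [Finsupp.add_apply, Finsupp.tsub_apply, Finsupp.single_eq_same]
        omega
      · simp [Finsupp.single_apply, Ne.symm hj, hj]
    have h2 : ((((m - Finsupp.single i 1) : Fin 3 →₀ ℕ) i : ℕ) : ℝ) + 1 = (m i : ℝ) := by
      rw [Finsupp.tsub_apply]
      simp only [Finsupp.single_eq_same]
      have := Nat.pos_of_ne_zero h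
      have : m i - 1 + 1 = m i := by omega
      exact_mod_cast congrArg (Nat.cast : ℕ → ℝ) this
    rw [h1, h2]

section Forward

variable {F : MvPolynomial (Fin 3) ℝ} (hF : ∀ G : MvPolynomial (Fin 3) ℝ, sl2Bracket F G = 0)

include hF

/-- From `{F, r} = 0`: `p ∂ₚF = q ∂_qF` coefficientwise. -/
lemma fact3 (m : Fin 3 →₀ ℕ) (hne : m 0 ≠ m 1) : coeff m F = 0 := by
  have h := hF (X 2)
  have h02 : pderiv 0 (X 2 : MvPolynomial (Fin 3) ℝ) = 0 := pderiv_X_of_ne (by decide)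
  have h12 : pderiv 1 (X 2 : MvPolynomial (Fin 3) ℝ) = 0 := pderiv_X_of_ne (by decide)
  have e : (2 : MvPolynomial (Fin 3) ℝ) * (X 1 * pderiv 1 F)
      = 2 * (X 0 * pderiv 0 F) := by
    simp only [sl2Bracket, h02, h12, pderiv_X_self] at h
    linear_combination h
  have := congrArg (coeff m) e
  rw [coeff_two_mul, coeff_two_mul, coeff_X_pderiv_self, coeff_X_pderiv_self] at this
  have h2 : ((m 1 : ℝ) - (m 0 : ℝ)) * coeff m F = 0 := by linarith
  rcases mul_eq_zero.1 h2 with h3 | h3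
  · exact absurd ((by exact_mod_cast sub_eq_zero.1 h3 : (m 1 : ℕ) = m 0)).symm hne
  · exact h3

/-- From `{F, p} = 0`: `2p ∂ᵣF = r ∂_qF`. -/
lemma fact1 (a b c : ℕ)
    (hhi : ∀ c', coeff (mk3 (a+1) (b+1) c') F = 0) :
    coeff (mk3 a b (c+1)) F = 0 := by
  have h := hF (X 0)
  have h10 : pderiv 1 (X 0 : MvPolynomial (Fin 3) ℝ) = 0 := pderiv_X_of_ne (by decide)
  have h20 : pderiv 2 (X 0 : MvPolynomial (Fin 3) ℝ) = 0 := pderiv_X_of_ne (by decide)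
  have e : (2 : MvPolynomial (Fin 3) ℝ) * (X 0 * pderiv 2 F)
      = X 2 * pderiv 1 F := by
    simp only [sl2Bracket, h10, h20, pderiv_X_self] at h
    linear_combination h
  have hc := congrArg (coeff (mk3 (a+1) b c)) e
  rw [coeff_two_mul, coeff_X_mul'', coeff_X_mul''] at hc
  rw [if_neg (by simp), mk3_sub_e0, coeff_pderiv, mk3_apply_2, mk3_add_e2] at hc
  -- RHS
  have hrhs : (if (mk3 (a+1) b c) 2 = 0 then 0
      else coeff (mk3 (a+1) b c - Finsupp.single 2 1) (pderiv 1 F)) = 0 := by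
    rcases Nat.eq_zero_or_pos c with hc0 | hc0
    · subst hc0; rw [if_pos (by simp)]
    · obtain ⟨c', rfl⟩ : ∃ c', c = c' + 1 := ⟨c - 1, by omega⟩
      rw [if_neg (by simp), mk3_sub_e2, coeff_pderiv, mk3_add_e1, mk3_apply_1, hhi]
      ring
  rw [hrhs] at hc
  have : (2 : ℝ) * (((c : ℝ) + 1) * coeff (mk3 a b (c+1)) F) = 0 := by
    rw [hc]
  have hpos : (2 : ℝ) * ((c : ℝ) + 1) ≠ 0 := by positivity
  rcases mul_eq_zero.1 this with h' | h'
  · norm_num at h'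
  · rcases mul_eq_zero.1 h' with h'' | h''
    · exfalso; apply hpos; rw [mul_eq_zero]; right; exact h''
    · exact h''

omit hF in
lemma coeff_eq_zero_of_lt {m : Fin 3 →₀ ℕ} (h : degreeOf 0 F < m 0) : coeff m F = 0 := by
  by_contra hc
  exact absurd (monomial_le_degreeOf 0 (mem_support_iff.2 hc)) (by omega)

/-- Main structural lemma: above-or-at the `p`-degree, the only possibly nonzero
coefficient is at `(K, K, 0)`. -/
lemma lemA {m : Fin 3 →₀ ℕ} (hdeg : degreeOf 0 F ≤ m 0)
    (hne : m ≠ mk3 (m 0) (m 0) 0) : coeff m F = 0 := by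
  by_contra hc
  have hle : m 0 ≤ degreeOf 0 F := monomial_le_degreeOf 0 (mem_support_iff.2 hc)
  have hK : degreeOf 0 F = m 0 := le_antisymm hdeg hle
  by_cases h10 : m 0 = m 1
  · by_cases h2 : m 2 = 0
    · refine absurd ?_ hne
      ext j; fin_cases j <;> simp [h2, ← h10]
    · obtain ⟨c, hc2⟩ : ∃ c, m 2 = c + 1 := ⟨m 2 - 1, by omega⟩
      apply hc
      have hhi : ∀ c', coeff (mk3 (m 0 + 1) (m 0 + 1) c') F = 0 := by
        intro c'
        apply coeff_eq_zero_of_lt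
        simp [hK]
      have hmeq : m = mk3 (m 0) (m 0) (m 2) := by
        ext j; fin_cases j <;> simp [h10]
      rw [hmeq, hc2]
      exact fact1 hF (m 0) (m 0) c hhi
  · exact hc (fact3 hF m h10)

end Forward

lemma casimir_pow (K : ℕ) (G : MvPolynomial (Fin 3) ℝ) : sl2Bracket (C3 ^ K) G = 0 := by
  have := casimir_aeval (Polynomial.X ^ K) G
  rwa [map_pow, Polynomial.aeval_X] at this

lemma four_X0_X1 : (4 * X 0 * X 1 : MvPolynomial (Fin 3) ℝ)
    = monomial (Finsupp.single 0 1 + Finsupp.single 1 1) 4 := by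
  rw [show (4 : MvPolynomial (Fin 3) ℝ) = C 4 from (map_ofNat _ 4).symm]
  rw [show (X 0 : MvPolynomial (Fin 3) ℝ) = monomial (Finsupp.single 0 1) 1 from rfl]
  rw [show (X 1 : MvPolynomial (Fin 3) ℝ) = monomial (Finsupp.single 1 1) 1 from rfl]
  rw [C_mul_monomial, monomial_mul]
  norm_num

lemma degreeOf_C3_pow (K : ℕ) : degreeOf 0 (C3 ^ K) ≤ K := by
  have h1 : degreeOf 0 C3 ≤ 1 := by
    refine (degreeOf_add_le _ _ _).trans ?_
    have a1 : degreeOf 0 (4 * X 0 * X 1 : MvPolynomial (Fin 3) ℝ) ≤ 1 := by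
      refine (degreeOf_mul_le _ _ _).trans ?_
      have : degreeOf 0 (4 * X 0 : MvPolynomial (Fin 3) ℝ) ≤ 1 := by
        refine (degreeOf_mul_le _ _ _).trans ?_
        rw [show (4 : MvPolynomial (Fin 3) ℝ) = C 4 from (map_ofNat _ 4).symm]
        rw [degreeOf_C, degreeOf_X]
        norm_num
      rw [degreeOf_X]
      simpa using this
    have a2 : degreeOf 0 (X 2 ^ 2 : MvPolynomial (Fin 3) ℝ) ≤ 1 := by
      refine (degreeOf_pow_le _ _ _).trans ?_
      simp [degreeOf_X]
    omega
  calc degreeOf 0 (C3 ^ K) ≤ K * degreeOf 0 C3 := degreeOf_pow_le _ _ _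
    _ ≤ K * 1 := Nat.mul_le_mul_left K h1
    _ = K := Nat.mul_one K

lemma coeff_C3_pow (K : ℕ) : coeff (mk3 K K 0) (C3 ^ K) = 4 ^ K := by
  induction K with
  | zero =>
    have h0 : mk3 0 0 0 = 0 := by ext j; fin_cases j <;> simp
    simp [h0]
  | succ k ih =>
    have hsplit : C3 ^ (k+1)
        = C3 ^ k * monomial (Finsupp.single 0 1 + Finsupp.single 1 1) 4
          + C3 ^ k * monomial (Finsupp.single 2 2) 1 := by
      have hC3 : C3 = monomial (Finsupp.single 0 1 + Finsupp.single 1 1) 4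
          + monomial (Finsupp.single 2 2) 1 := by
        rw [C3, four_X0_X1, X_pow_eq_monomial]
      rw [pow_succ]
      nth_rewrite 2 [hC3]
      rw [mul_add]
    have hm : mk3 (k+1) (k+1) 0
        = mk3 k k 0 + (Finsupp.single 0 1 + Finsupp.single 1 1) := by
      ext j; fin_cases j <;> simp [Finsupp.single_apply]
    rw [hsplit, coeff_add, hm, coeff_mul_monomial, coeff_mul_monomial']
    rw [if_neg (by
      rw [Finsupp.single_le_iff]
      simp [Finsupp.single_apply])]
    rw [ih]; ring

end Sl2Aux

open Sl2Aux

theorem sl2_casimir_iff (F : MvPolynomial (Fin 3) ℝ) :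
    (∀ G : MvPolynomial (Fin 3) ℝ, sl2Bracket F G = 0)
      ↔ ∃ u : Polynomial ℝ,
          F = Polynomial.aeval (4 * X 0 * X 1 + X 2 ^ 2 : MvPolynomial (Fin 3) ℝ) u := by
  constructor
  · intro hF
    suffices h : ∀ n (F : MvPolynomial (Fin 3) ℝ), (∀ G, sl2Bracket F G = 0)
        → degreeOf 0 F ≤ n → ∃ u : Polynomial ℝ, F = Polynomial.aeval C3 u by
      obtain ⟨u, hu⟩ := h (degreeOf 0 F) F hF le_rfl
      exact ⟨u, hu⟩
    intro n
    induction n using Nat.strong_induction_on with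
    | _ n ih =>
      intro F hF hdeg
      set K := degreeOf 0 F with hKdef
      set c := coeff (mk3 K K 0) F with hcdef
      set F' := F - C (c / 4 ^ K) * C3 ^ K with hF'def
      have hF'cas : ∀ G, sl2Bracket F' G = 0 := by
        intro G
        rw [hF'def, sl2Bracket_sub, hF G, sl2Bracket_mul, sl2Bracket_Ca, casimir_pow]
        ring
      have hzero : ∀ m : Fin 3 →₀ ℕ, K ≤ m 0 → coeff m F' = 0 := by
        intro m hm
        rw [hF'def, coeff_sub, coeff_C_mul]
        by_cases hme : m = mk3 (m 0) (m 0) 0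
        · rcases eq_or_lt_of_le hm with heq | hlt
          · have hmK : m = mk3 K K 0 := by rw [hme, ← heq]
            rw [hmK, coeff_C3_pow, ← hcdef]
            field_simp
            ring
          · rw [coeff_eq_zero_of_lt hlt,
              coeff_eq_zero_of_lt (lt_of_le_of_lt (degreeOf_C3_pow K) hlt)]
            ring
        · rw [lemA hF hm hme, lemA (casimir_pow K) ((degreeOf_C3_pow K).trans hm) hme]
          ring
      rcases Nat.eq_zero_or_pos K with hK0 | hKpos
      · have hF'0 : F' = 0 := by
          apply MvPolynomial.ext
          intro m
          rw [coeff_zero]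
          exact hzero m (by omega)
        refine ⟨Polynomial.C c, ?_⟩
        have hFeq : F = C (c / 4 ^ K) * C3 ^ K := by
          have := sub_eq_zero.1 hF'0
          exact this
        rw [hFeq, hK0]
        simp [Polynomial.aeval_C]
      · have hdeg' : degreeOf 0 F' ≤ K - 1 := by
          rw [degreeOf_le_iff]
          intro m hm
          by_contra hcon
          exact (mem_support_iff.1 hm) (hzero m (by omega))
        obtain ⟨u', hu'⟩ := ih (K - 1) (by omega) F' hF'cas hdeg'
        refine ⟨u' + Polynomial.C (c / 4 ^ K) * Polynomial.X ^ K, ?_⟩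
        have hFeq : F = F' + C (c / 4 ^ K) * C3 ^ K := by rw [hF'def]; ring
        rw [hFeq, hu', map_add, map_mul, map_pow, Polynomial.aeval_X, Polynomial.aeval_C]
        rfl
  · rintro ⟨u, rfl⟩ G
    exact casimir_aeval u G
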